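/- arXiv:1912.12483 — 2 statements merged into one kernel-verified Lean document; each statement's English description precedes it below -/
import Mathlib

section
/- Let k be a field of characteristic zero and G a group. Suppose P is a class of objects of FDRep k G that is closed under isomorphism, closed under retracts (if Y is a direct summand of X and X belongs to P then Y belongs to P), and closed under tensoring with arbitrary objects (if X belongs to P and Y is any object then X ⊗ Y belongs to P). If P contains some nonzero representation, then P contains every object of FDRep k G. (This instantiates the paper's Lemma that a Tannakian category in characteristic zero is simple, at the neutral Tannakian category of finite-dimensional representations.) -/
open CategoryTheory MonoidalCategory Limits

lemma trace_rep_conj {k G V : Type} [Field k] [Group G] [AddCommGroup V] [Module k V]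
    [FiniteDimensional k V] (ρ : Representation k G V) (g : G) (f : V →ₗ[k] V) :
    LinearMap.trace k V (ρ g ∘ₗ f ∘ₗ ρ g⁻¹) = LinearMap.trace k V f := by
  rw [show ρ g ∘ₗ f ∘ₗ ρ g⁻¹ = ρ g * (f * ρ g⁻¹) from rfl, LinearMap.trace_mul_comm,
    mul_assoc, ← map_mul, inv_mul_cancel, map_one, mul_one]

lemma rep_conj_id {k G V : Type} [Field k] [Group G] [AddCommGroup V] [Module k V]
    (ρ : Representation k G V) (g : G) (c : k) :
    ρ g ∘ₗ (c • LinearMap.id) ∘ₗ ρ g⁻¹ = c • (LinearMap.id : V →ₗ[k] V) := by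
  apply LinearMap.ext
  intro x
  simp only [LinearMap.comp_apply, LinearMap.smul_apply, LinearMap.id_apply, map_smul]
  rw [← Module.End.mul_apply, ← map_mul, mul_inv_cancel, map_one, Module.End.one_apply]

/-- A Tannakian category in characteristic zero is simple, instantiated at `FDRep k G`:
any class of objects closed under isomorphism, retracts and tensoring with arbitrary
objects, containing a nonzero object, contains every object. -/
theorem fdRep_simple_of_charZero
    (k G : Type) [Field k] [CharZero k] [Group G]
    (P : FDRep k G → Prop)
    (hiso : ∀ {X Y : FDRep k G}, (X ≅ Y) → P X → P Y)
    (hretract : ∀ {X Y : FDRep k G} (i : Y ⟶ X) (r : X ⟶ Y),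
      i ≫ r = 𝟙 Y → P X → P Y)
    (htensor : ∀ {X : FDRep k G} (Y : FDRep k G), P X → P (X ⊗ Y))
    (hnonzero : ∃ X : FDRep k G, P X ∧ ¬ IsZero X) :
    ∀ X : FDRep k G, P X := by
  obtain ⟨X, hPX, hX⟩ := hnonzero
  -- First: `P` contains the unit object `𝟙_`.
  have hunit : P (𝟙_ (FDRep k G)) := by
    -- `X` nonzero means its finrank is positive.
    have hfin : Module.finrank k X ≠ 0 := by
      intro h
      apply hX
      haveI hsub : Subsingleton X := Module.finrank_zero_iff.mp h
      refine ⟨fun Y => ⟨⟨⟨0⟩, fun f => ?_⟩⟩, fun Y => ⟨⟨⟨0⟩, fun f => ?_⟩⟩⟩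
      · apply Action.hom_ext
        apply FGModuleCat.hom_ext
        apply LinearMap.ext
        intro x
        have hx : x = (0 : X) := Subsingleton.elim (α := X) _ _
        rw [hx, map_zero, map_zero]
      · apply Action.hom_ext
        apply FGModuleCat.hom_ext
        apply LinearMap.ext
        intro x
        exact Subsingleton.elim (α := X) _ _
    have hfink : (Module.finrank k X : k) ≠ 0 := Nat.cast_ne_zero.mpr hfin
    -- `P (X ⊗ dual X)`
    have h1 : P (X ⊗ FDRep.of (Representation.dual X.ρ)) := htensor _ hPX
    have h2 : P (FDRep.of (Representation.dual X.ρ) ⊗ X) := hiso (β_ _ _) h1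
    have h3 : P (FDRep.of (Representation.linHom X.ρ X.ρ)) :=
      hiso (FDRep.dualTensorIsoLinHom X.ρ X) h2
    -- `𝟙_` is a retract of `linHom X X` via `c ↦ c • id` and the normalized trace.
    refine hretract (X := FDRep.of (Representation.linHom X.ρ X.ρ)) ?_ ?_ ?_ h3
    · refine ⟨FGModuleCat.ofHom (LinearMap.toSpanSingleton k _ (LinearMap.id : X →ₗ[k] X)), fun g => ?_⟩
      apply FGModuleCat.hom_ext
      apply LinearMap.ext
      intro c
      show (LinearMap.toSpanSingleton k (X →ₗ[k] X) LinearMap.id) c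
        = Representation.linHom X.ρ X.ρ g
            ((LinearMap.toSpanSingleton k (X →ₗ[k] X) LinearMap.id) c)
      simp only [LinearMap.toSpanSingleton_apply, Representation.linHom_apply]
      exact (rep_conj_id X.ρ g c).symm
    · refine ⟨FGModuleCat.ofHom ((Module.finrank k X : k)⁻¹ • LinearMap.trace k X), fun g => ?_⟩
      apply FGModuleCat.hom_ext
      apply LinearMap.ext
      intro f
      show ((Module.finrank k X : k)⁻¹ • LinearMap.trace k X)
          (Representation.linHom X.ρ X.ρ g (f : X →ₗ[k] X))
        = ((Module.finrank k X : k)⁻¹ • LinearMap.trace k X) (f : X →ₗ[k] X)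
      simp only [Representation.linHom_apply, LinearMap.smul_apply]
      rw [trace_rep_conj]
    · apply Action.hom_ext
      apply FGModuleCat.hom_ext
      apply LinearMap.ext
      intro c
      show ((Module.finrank k X : k)⁻¹ • LinearMap.trace k X)
          ((LinearMap.toSpanSingleton k (X →ₗ[k] X) LinearMap.id) c) = c
      simp only [LinearMap.toSpanSingleton_apply, LinearMap.smul_apply, map_smul,
        LinearMap.trace_id, smul_eq_mul]
      field_simp
  -- Now any object `Y` is isomorphic to `𝟙_ ⊗ Y`.
  intro Y
  exact hiso (λ_ Y) (htensor Y hunit)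
end

section
/- Let X and Y be spectral spaces and f : X → Y a spectral map which is bijective and lifts all specialization relations: whenever y ⤳ y' is a specialization in Y (y' lies in the closure of y) and f(x) = y, there exists x' ∈ X with x ⤳ x' and f(x') = y'. Then f is a homeomorphism. -/
open TopologicalSpace

/-- A bijective spectral map between spectral spaces which lifts all specialization
relations is a homeomorphism. (A spectral space is a quasi-compact sober space whose
quasi-compact open subsets form a basis closed under finite intersections; the latter
closure property is expressed by `QuasiSeparatedSpace`.) -/
theorem isHomeomorph_of_spectral_bijective_specialization_lifting
    {X Y : Type} [TopologicalSpace X] [TopologicalSpace Y]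
    [CompactSpace X] [QuasiSober X] [QuasiSeparatedSpace X]
    (hXb : IsTopologicalBasis {s : Set X | IsOpen s ∧ IsCompact s})
    [CompactSpace Y] [QuasiSober Y] [QuasiSeparatedSpace Y]
    (hYb : IsTopologicalBasis {s : Set Y | IsOpen s ∧ IsCompact s})
    (f : X → Y) (hf : IsSpectralMap f) (hbij : Function.Bijective f)
    (hlift : ∀ (x : X) (y' : Y), f x ⤳ y' → ∃ x' : X, x ⤳ x' ∧ f x' = y') :
    IsHomeomorph f := by
  -- It suffices to show that the image of every quasi-compact open set is open.
  have key : ∀ U : Set X, IsOpen U → IsCompact U → IsOpen (f '' U) := by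
    intro U hUo hUc
    rw [isOpen_iff_forall_mem_open]
    rintro y ⟨x, hxU, rfl⟩
    by_contra hcon
    push_neg at hcon
    -- the family of quasi-compact open neighbourhoods of `f x`
    set S : Set (Set Y) := {V | (IsOpen V ∧ IsCompact V) ∧ f x ∈ V} with hS
    -- each `f ⁻¹' V ∩ Uᶜ` is nonempty
    have hne : ∀ V ∈ S, (f ⁻¹' V ∩ Uᶜ).Nonempty := by
      intro V hV
      rw [Set.nonempty_iff_ne_empty]
      intro hemp
      have hsub : f ⁻¹' V ⊆ U := by
        intro z hz
        by_contra hzU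
        exact Set.eq_empty_iff_forall_notMem.1 hemp z ⟨hz, hzU⟩
      have : V ⊆ f '' U := by
        intro v hv
        obtain ⟨z, rfl⟩ := hbij.2 v
        exact ⟨z, hsub hv, rfl⟩
      exact hcon V this hV.1.1 hV.2
    -- each `f ⁻¹' V ∩ Uᶜ` is compact
    have hcomp : ∀ V ∈ S, IsCompact (f ⁻¹' V ∩ Uᶜ) :=
      fun V hV => (hf.isCompact_preimage_of_isOpen hV.1.1 hV.1.2).inter_right
        hUo.isClosed_compl
    -- the collection of closed sets meeting every `f ⁻¹' V ∩ Uᶜ`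
    set P : Set (Set X) :=
      {F | IsClosed F ∧ ∀ V ∈ S, (F ∩ (f ⁻¹' V ∩ Uᶜ)).Nonempty} with hP
    have huniv : Set.univ ∈ P := by
      refine ⟨isClosed_univ, fun V hV => ?_⟩
      simpa using hne V hV
    -- Zorn's lemma: a minimal element of `P`
    obtain ⟨F, -, hFP, hFmin⟩ : ∃ F, F ⊆ Set.univ ∧ Minimal (· ∈ P) F := by
      refine zorn_superset_nonempty P ?_ _ huniv
      intro c hcP hchain hcne
      refine ⟨⋂₀ c, ⟨isClosed_sInter fun F hF => (hcP hF).1, ?_⟩,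
        fun s hs => Set.sInter_subset_of_mem hs⟩
      intro V hV
      have hVc := hcomp V hV
      have hfin : ∀ u : Finset c, ((f ⁻¹' V ∩ Uᶜ) ∩ ⋂ F ∈ u, (F : Set X)).Nonempty := by
        intro u
        rcases u.eq_empty_or_nonempty with rfl | hu
        · simpa using hne V hV
        · obtain ⟨F₀, hF₀u, hF₀min⟩ := u.exists_minimal hu
          have hmin : ∀ G ∈ u, (F₀ : Set X) ⊆ (G : Set X) := by
            intro G hGu
            rcases eq_or_ne F₀ G with rfl | hneq
            · exact subset_rfl
            · rcases hchain F₀.2 G.2 (fun h => hneq (Subtype.ext h)) with h | h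
              · exact h
              · exact hF₀min hGu h
          obtain ⟨z, hz⟩ := (hcP F₀.2).2 V hV
          exact ⟨z, hz.2, Set.mem_biInter fun G hGu => hmin G hGu hz.1⟩
      have := hVc.inter_iInter_nonempty (fun F : c => (F : Set X))
        (fun F => (hcP F.2).1) hfin
      obtain ⟨z, hz1, hz2⟩ := this
      refine ⟨z, ?_, hz1⟩
      rw [Set.sInter_eq_iInter]
      exact hz2
    -- `F ⊆ Uᶜ`
    have hFU : F ⊆ Uᶜ := by
      have hmem : F ∩ Uᶜ ∈ P := by
        refine ⟨hFP.1.inter hUo.isClosed_compl, fun V hV => ?_⟩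
        obtain ⟨z, hz1, hz2⟩ := hFP.2 V hV
        exact ⟨z, ⟨hz1, hz2.2⟩, hz2⟩
      have := hFmin hmem Set.inter_subset_left
      exact fun z hz => (this hz).2
    -- `F` is irreducible
    have hFne : F.Nonempty := by
      obtain ⟨z, hz, -⟩ := hFP.2 Set.univ ⟨⟨isOpen_univ, isCompact_univ⟩, trivial⟩
      exact ⟨z, hz⟩
    have hFirr : IsIrreducible F := by
      refine ⟨hFne, fun O₁ O₂ hO₁ hO₂ h₁ h₂ => ?_⟩
      have hnotP : ∀ (O : Set X), IsOpen O → (F ∩ O).Nonempty →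
          ∃ V ∈ S, F ∩ (f ⁻¹' V ∩ Uᶜ) ⊆ O := by
        intro O hO ⟨a, haF, haO⟩
        have : F \ O ∉ P := by
          intro hmem
          have := hFmin hmem Set.diff_subset
          exact (this haF).2 haO
        rw [hP, Set.mem_setOf_eq] at this
        push_neg at this
        obtain ⟨V, hVS, hVemp⟩ := this (hFP.1.sdiff hO)
        refine ⟨V, hVS, fun z hz => ?_⟩
        by_contra hzO
        exact Set.eq_empty_iff_forall_notMem.1 hVemp z ⟨⟨hz.1, hzO⟩, hz.2⟩
      obtain ⟨V₁, hV₁S, hV₁⟩ := hnotP O₁ hO₁ h₁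
      obtain ⟨V₂, hV₂S, hV₂⟩ := hnotP O₂ hO₂ h₂
      have hV₁₂ : V₁ ∩ V₂ ∈ S :=
        ⟨⟨hV₁S.1.1.inter hV₂S.1.1,
          QuasiSeparatedSpace.inter_isCompact _ _ hV₁S.1.1 hV₁S.1.2 hV₂S.1.1 hV₂S.1.2⟩,
          ⟨hV₁S.2, hV₂S.2⟩⟩
      obtain ⟨z, hzF, hzV, hzU⟩ := hFP.2 _ hV₁₂
      exact ⟨z, hzF, hV₁ ⟨hzF, ⟨hzV.1, hzU⟩⟩, hV₂ ⟨hzF, ⟨hzV.2, hzU⟩⟩⟩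
    -- generic point of `F`
    obtain ⟨ξ, hξ⟩ := QuasiSober.sober hFirr hFP.1
    -- `ξ` lies in every `f ⁻¹' V`, `V ∈ S`
    have hξV : ∀ V ∈ S, ξ ∈ f ⁻¹' V := by
      intro V hV
      obtain ⟨z, hzF, hzV, -⟩ := hFP.2 V hV
      have hzcl : z ∈ closure ({ξ} : Set X) := hξ ▸ hzF
      rcases mem_closure_iff.1 hzcl _ (hV.1.1.preimage hf.continuous) hzV with ⟨w, hw1, hw2⟩
      rwa [Set.mem_singleton_iff.1 hw2] at hw1
    -- hence `f ξ ⤳ f x`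
    have hspec : f ξ ⤳ f x := by
      rw [specializes_iff_forall_open]
      intro s hs hxs
      obtain ⟨V, hVb, hxV, hVs⟩ := hYb.exists_subset_of_mem_open hxs hs
      exact hVs (hξV V ⟨hVb, hxV⟩)
    obtain ⟨x', hxx', hfx'⟩ := hlift ξ (f x) hspec
    have hx'x : x' = x := hbij.1 hfx'
    rw [hx'x] at hxx'
    have : x ∈ F := hξ ▸ hxx'.mem_closure
    exact hFU this hxU
  -- conclude
  refine ⟨hf.continuous, ?_, hbij⟩
  intro O hO
  rw [isOpen_iff_forall_mem_open]
  rintro y ⟨x, hxO, rfl⟩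
  obtain ⟨U, hUb, hxU, hUO⟩ := hXb.exists_subset_of_mem_open hxO hO
  exact ⟨f '' U, Set.image_mono hUO, key U hUb.1 hUb.2, ⟨x, hxU, rfl⟩⟩
end
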